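/- There is no positive (10,3)-reverse multiple; that is, there is no positive integer M such that the reversal of the decimal digit expansion of M equals the decimal digit expansion of 3·M. -/

import Mathlib

lemma last_digit_eq (N : ℕ) (h : 0 < N) :
    (Nat.digits 10 N).getLast? = some (N / 10 ^ ((Nat.digits 10 N).length - 1)) := by
  induction N using Nat.strong_induction_on with
  | _ N ih =>
    rw [Nat.digits_def' (by norm_num : (1:ℕ) < 10) h]
    rcases Nat.lt_or_ge N 10 with hlt | hge
    · have : N / 10 = 0 := Nat.div_eq_of_lt hlt
      simp [this, Nat.mod_eq_of_lt hlt]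
    · have hpos : 0 < N / 10 := Nat.div_pos hge (by norm_num)
      have hne : Nat.digits 10 (N / 10) ≠ [] := Nat.digits_ne_nil_iff_ne_zero.mpr hpos.ne'
      have ihh := ih (N / 10) (Nat.div_lt_self h (by norm_num)) hpos
      rw [List.getLast?_cons, ihh, Option.getD_some]
      have hlen : 1 ≤ (Nat.digits 10 (N / 10)).length := List.length_pos_iff.mpr hne
      congr 1
      rw [List.length_cons, Nat.div_div_eq_div_mul]
      congr 1
      rw [← pow_succ']
      congr 1
      omega

/-- There is no positive `(10, 3)`-reverse multiple. -/
theorem stmt_7 :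
    ¬ ∃ M : ℕ, 0 < M ∧ (Nat.digits 10 M).reverse = Nat.digits 10 (3 * M) := by
  rintro ⟨M, hM, hrev⟩
  have hM3 : 0 < 3 * M := by omega
  set n := (Nat.digits 10 M).length with hn
  have hlen : (Nat.digits 10 (3 * M)).length = n := by
    rw [← hrev, List.length_reverse]
  have hnpos : 1 ≤ n :=
    List.length_pos_iff.mpr (Nat.digits_ne_nil_iff_ne_zero.mpr hM.ne')
  set P : ℕ := 10 ^ (n - 1) with hP
  have hPpos : 0 < P := Nat.pow_pos (by norm_num)
  have h10P : 10 ^ n = 10 * P := by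
    rw [hP, ← pow_succ']
    congr 1
    omega
  -- bounds
  have h3Mlt : 3 * M < 10 * P := by
    have := Nat.lt_base_pow_length_digits (b := 10) (m := 3 * M) (by norm_num)
    rwa [hlen, h10P] at this
  have hMge : P ≤ M := by
    have h1 : 10 ^ n ≤ 10 * M := Nat.base_pow_length_digits_le 10 M (by norm_num) hM.ne'
    rw [h10P] at h1
    exact Nat.le_of_mul_le_mul_left h1 (by norm_num)
  set a : ℕ := M / P with ha
  set b : ℕ := M % 10 with hb
  -- first digit of 3*M equals last digit of M, i.e. a
  have hhead : (3 * M) % 10 = a := by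
    have h1 : (Nat.digits 10 (3 * M)).head? = some ((3 * M) % 10) := by
      rw [Nat.digits_def' (by norm_num : (1:ℕ) < 10) hM3]
      rfl
    have h2 : (Nat.digits 10 (3 * M)).head? = (Nat.digits 10 M).getLast? := by
      rw [← hrev, List.head?_reverse]
    rw [h2, last_digit_eq M hM, ← hn] at h1
    exact (Option.some_inj.mp h1).symm
  -- last digit of 3*M equals first digit of M, i.e. b
  have hlast : 3 * M / P = b := by
    have h1 : (Nat.digits 10 (3 * M)).getLast? = some (3 * M / P) := by
      rw [last_digit_eq (3 * M) hM3, hlen]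
    have h2 : (Nat.digits 10 (3 * M)).getLast? = (Nat.digits 10 M).head? := by
      rw [← hrev, List.getLast?_reverse]
    have h3 : (Nat.digits 10 M).head? = some (M % 10) := by
      rw [Nat.digits_def' (by norm_num : (1:ℕ) < 10) hM]
      rfl
    rw [h2, h3] at h1
    exact (Option.some_inj.mp h1.symm)
  -- arithmetic
  have hMeq : P * a + M % P = M := Nat.div_add_mod M P
  have hrlt : M % P < P := Nat.mod_lt _ hPpos
  set r : ℕ := M % P with hr
  have hring : P * (3 * a) = 3 * (P * a) := by ring
  have h3Meq : 3 * M = P * (3 * a) + 3 * r := by omega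
  have hdiv : 3 * M / P = 3 * a + 3 * r / P := by
    rw [h3Meq, Nat.mul_add_div hPpos]
  set t : ℕ := 3 * r / P with ht
  have htlt : t < 3 := Nat.div_lt_of_lt_mul (by omega)
  have ha1 : 1 ≤ a := (Nat.one_le_div_iff hPpos).mpr hMge
  have ha3 : a ≤ 3 := by
    have h1 : P * a ≤ M := by omega
    have h2 : P * (3 * a) < P * 10 := by omega
    have := Nat.lt_of_mul_lt_mul_left h2
    omega
  have hbt : b = 3 * a + t := by omega
  have hm : (3 * M) % 10 = (3 * b) % 10 := by
    rw [Nat.mul_mod, hb, Nat.mul_mod 3 (M % 10)]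
  clear_value a b t
  clear hdiv hlast h3Meq hring hMeq h3Mlt hMge
  interval_cases a <;> omega
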